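/- Let i, j ∈ {1,…,n} with |i − j| = 1. Then there is an isomorphism of (O(Z),O(Z))-bimodules O(V_j) ⊗_{O(V_j)^{s_j}} O(V_i ∩ V_j) ⊗_{O(V_i)^{s_i}} O(V_i ∩ V_j) ⊗_{O(V_j)^{s_j}} O(V_j) ≅ O(V_j) ⊗_{O(V_j)^{s_j}} O(V_j), where the left and right O(Z)-actions are through the restrictions O(Z) → O(V_j) on the outer factors. (This is the first Temperley–Lieb relation B_j ∗ B_i ∗ B_j ≅ B_j for the bimodules B_i := O(V_i) ⊗_{O(V_i)^{s_i}} O(V_i).) -/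

import Mathlib

/-! Basic setup: type A_n geometric representation, Weyl lines, combinatorics. -/

set_option linter.unusedSectionVars false
set_option synthInstance.maxHeartbeats 1000000
set_option maxHeartbeats 1000000

namespace TLpaper

/-- A permutation is a transposition. -/
def IsTransposition {α : Type} [DecidableEq α] (σ : Equiv.Perm α) : Prop :=
  ∃ a b, a ≠ b ∧ σ = Equiv.swap a b

variable (k : Type) [Field k] [CharZero k] (n : ℕ)

/-- The reflecting hyperplane of a permutation `t` inside `V = {x | ∑ x i = 0}`:
the set of points of `V` fixed by permuting the coordinates by `t`.  For a
transposition `t = (a b)` this is `{x ∈ V | x a = x b}`. -/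
def Hyp (t : Equiv.Perm (Fin (n + 1))) : Set (Fin (n + 1) → k) :=
  {x | (∑ i, x i) = 0 ∧ ∀ i, x (t i) = x i}

/-- A Weyl line: a one-dimensional linear subspace of `V` which is an
intersection of a (possibly empty) family of reflecting hyperplanes. -/
def IsWeylLine (L : Set (Fin (n + 1) → k)) : Prop :=
  (∃ v : Fin (n + 1) → k, v ≠ 0 ∧ L = Set.range fun c : k => c • v) ∧
  ∃ T : Set (Equiv.Perm (Fin (n + 1))),
    (∀ t ∈ T, IsTransposition t) ∧
    L = {x | (∑ i, x i) = 0} ∩ ⋂ t ∈ T, Hyp k n t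

/-- `Z`: the union of all Weyl lines. -/
def ZZ : Set (Fin (n + 1) → k) := ⋃ L ∈ {L | IsWeylLine k n L}, L

/-- `V_t`: the union of all Weyl lines transverse to `t` (i.e. not contained in `H_t`). -/
def Vt (t : Equiv.Perm (Fin (n + 1))) : Set (Fin (n + 1) → k) :=
  ⋃ L ∈ {L | IsWeylLine k n L ∧ ¬L ⊆ Hyp k n t}, L

open Fin.NatCast in
/-- The simple transposition `s_i = (i, i+1)` (0-indexed: it swaps coordinates
`i` and `i+1` of `Fin (n+1)`, for `i < n`). -/
def simple (i : ℕ) : Equiv.Perm (Fin (n + 1)) :=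
  Equiv.swap (i : Fin (n + 1)) ((i + 1 : ℕ) : Fin (n + 1))

/-- `V_i := V_{s_i}`. -/
def Vi (i : ℕ) : Set (Fin (n + 1) → k) := Vt k n (simple n i)

/-- The action of a permutation on a subset of `k^{n+1}` (permuting coordinates). -/
def permSet (σ : Equiv.Perm (Fin (n + 1))) (W : Set (Fin (n + 1) → k)) :
    Set (Fin (n + 1) → k) :=
  (fun x => x ∘ σ) '' W

/-- `i · W := V_i ∩ (W ∪ s_i (W))`. -/
def dotAct (i : ℕ) (W : Set (Fin (n + 1) → k)) : Set (Fin (n + 1) → k) :=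
  Vi k n i ∩ (W ∪ permSet k n (simple n i) W)

/-- The set `W_{i_1 ⋯ i_m}` associated with a sequence of indices. -/
def seqSet : List ℕ → Set (Fin (n + 1) → k)
  | [] => ZZ k n
  | [i] => Vi k n i
  | i :: j :: l => dotAct k n i (seqSet (j :: l))

/-- Membership in the family `𝒱_n`. -/
def memVn (W : Set (Fin (n + 1) → k)) : Prop :=
  ∃ l : List ℕ, l ≠ [] ∧ (∀ i ∈ l, i < n) ∧ W = seqSet k n l

/-- A set of pairwise commuting transpositions. -/
def CommTranspositions (Q : Set (Equiv.Perm (Fin (n + 1)))) : Prop :=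
  (∀ t ∈ Q, IsTransposition t) ∧ ∀ t ∈ Q, ∀ t' ∈ Q, t * t' = t' * t


/-! Coordinate rings of subvarieties of `k^{n+1}`. -/

noncomputable section

/-- The ring `O(X)` of regular functions on `X`: the quotient of the polynomial ring
`k[X_0, …, X_n]` by the vanishing ideal of `X`. -/
def O (X : Set (Fin (n + 1) → k)) : Type :=
  MvPolynomial (Fin (n + 1)) k ⧸ MvPolynomial.vanishingIdeal k X

instance (X : Set (Fin (n + 1) → k)) : CommRing (O k n X) :=
  inferInstanceAs (CommRing (MvPolynomial (Fin (n + 1)) k ⧸ MvPolynomial.vanishingIdeal k X))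

theorem vanishingIdeal_anti {X Y : Set (Fin (n + 1) → k)} (h : X ⊆ Y) :
    MvPolynomial.vanishingIdeal k Y ≤ MvPolynomial.vanishingIdeal k X := fun p hp => by
  rw [MvPolynomial.mem_vanishingIdeal_iff] at hp ⊢
  exact fun x hx => hp x (h hx)

/-- The (surjective) restriction homomorphism `O(Y) → O(X)` for `X ⊆ Y`. -/
def res {X Y : Set (Fin (n + 1) → k)} (h : X ⊆ Y) : O k n Y →+* O k n X :=
  Ideal.Quotient.factor (vanishingIdeal_anti k n h)

open Classical in
/-- The ring endomorphism of `O(X)` induced by a permutation `σ` of the coordinates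
(when `X` is `σ`-stable; the definition branches on this (true, in our uses)
stability condition to be total). -/
def permO (σ : Equiv.Perm (Fin (n + 1))) (X : Set (Fin (n + 1) → k)) :
    O k n X →+* O k n X :=
  if h : ∀ x ∈ X, x ∘ σ ∈ X then
    Ideal.Quotient.lift _
      ((Ideal.Quotient.mk _).comp (MvPolynomial.rename (R := k) ⇑σ).toRingHom)
      (fun p hp => by
        have hmem : (MvPolynomial.rename (R := k) ⇑σ) p ∈
            MvPolynomial.vanishingIdeal k X := by
          rw [MvPolynomial.mem_vanishingIdeal_iff]
          intro x hx
          rw [MvPolynomial.aeval_rename]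
          exact (MvPolynomial.mem_vanishingIdeal_iff.1 hp) _ (h x hx)
        exact Ideal.Quotient.eq_zero_iff_mem.2 hmem)
  else RingHom.id _

/-- The fixed subalgebra `O(V_i)^{s_i}` of `O(V_i)` under the automorphism induced
by the simple transposition `s_i`. -/
def fixedO (i : ℕ) : Subring (O k n (Vi k n i)) :=
  RingHom.eqLocus (permO k n (simple n i) (Vi k n i)) (RingHom.id _)

open Fin.NatCast in
/-- The image `f_i` of `X_i − X_{i+1}` in the coordinate ring `O(X)`. -/
def fbar (X : Set (Fin (n + 1) → k)) (i : ℕ) : O k n X :=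
  Ideal.Quotient.mk _
    (MvPolynomial.X (i : Fin (n + 1)) - MvPolynomial.X ((i + 1 : ℕ) : Fin (n + 1)))

theorem Vt_subset_ZZ (t : Equiv.Perm (Fin (n + 1))) : Vt k n t ⊆ ZZ k n := by
  refine Set.iUnion₂_subset fun L hL => ?_
  exact Set.subset_iUnion₂ (s := fun L _ => L) L hL.1

theorem Vi_subset_ZZ (i : ℕ) : Vi k n i ⊆ ZZ k n := Vt_subset_ZZ k n _

theorem seqSet_subset_ZZ : ∀ l : List ℕ, seqSet k n l ⊆ ZZ k n
  | [] => subset_rfl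
  | [_] => Vi_subset_ZZ k n _
  | _ :: _ :: _ => Set.inter_subset_left.trans (Vi_subset_ZZ k n _)

end

/-! Tensor products of commutative rings along ring homomorphisms. -/

noncomputable section RTensor

open scoped TensorProduct

variable (R A B : Type) [CommRing R] [CommRing A] [CommRing B]
variable (f : R →+* A) (g : R →+* B)

/-- The tensor product `A ⊗_R B` of two commutative rings along the ring
homomorphisms `f : R → A` and `g : R → B` (which define the `R`-module
structures); it is again a commutative ring. -/
def RTensor : Type :=
  letI := f.toAlgebra
  letI := g.toAlgebra
  A ⊗[R] B

instance : CommRing (RTensor R A B f g) :=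
  letI := f.toAlgebra
  letI := g.toAlgebra
  (inferInstance : CommRing (A ⊗[R] B))

/-- The inclusion `a ↦ a ⊗ 1` of the left factor. -/
def RTensor.inl : A →+* RTensor R A B f g :=
  letI := f.toAlgebra
  letI := g.toAlgebra
  Algebra.TensorProduct.includeLeftRingHom

/-- The inclusion `b ↦ 1 ⊗ b` of the right factor. -/
def RTensor.inr : B →+* RTensor R A B f g :=
  letI := f.toAlgebra
  letI := g.toAlgebra
  Algebra.TensorProduct.includeRight.toRingHom

end RTensor

/-! Quotient-ring plumbing and basic geometry of Weyl lines. -/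

noncomputable section Plumbing

open MvPolynomial
open Fin.NatCast

variable (k : Type) [Field k] [CharZero k] (n : ℕ)

/-- The quotient map onto `O(X)`. -/
noncomputable def mkO (X : Set (Fin (n + 1) → k)) :
    MvPolynomial (Fin (n + 1)) k →+* O k n X :=
  Ideal.Quotient.mk (MvPolynomial.vanishingIdeal k X)

theorem mkO_surjective (X : Set (Fin (n + 1) → k)) : Function.Surjective (mkO k n X) :=
  Ideal.Quotient.mk_surjective

theorem res_mkO {X Y : Set (Fin (n + 1) → k)} (h : X ⊆ Y) (p : MvPolynomial (Fin (n + 1)) k) :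
    res k n h (mkO k n Y p) = mkO k n X p :=
  Ideal.Quotient.factor_mk _ _

theorem mkO_eq_zero_iff (X : Set (Fin (n + 1) → k)) (p : MvPolynomial (Fin (n + 1)) k) :
    mkO k n X p = 0 ↔ ∀ x ∈ X, MvPolynomial.eval x p = 0 :=
  Iff.trans Ideal.Quotient.eq_zero_iff_mem MvPolynomial.mem_vanishingIdeal_iff

theorem mkO_eq_iff (X : Set (Fin (n + 1) → k)) (p q : MvPolynomial (Fin (n + 1)) k) :
    mkO k n X p = mkO k n X q ↔ ∀ x ∈ X, MvPolynomial.eval x (p - q) = 0 :=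
  Iff.trans (Ideal.Quotient.mk_eq_mk_iff_sub_mem p q) MvPolynomial.mem_vanishingIdeal_iff

theorem permO_mkO (σ : Equiv.Perm (Fin (n + 1))) (X : Set (Fin (n + 1) → k))
    (h : ∀ x ∈ X, x ∘ σ ∈ X) (p : MvPolynomial (Fin (n + 1)) k) :
    permO k n σ X (mkO k n X p) = mkO k n X (MvPolynomial.rename (⇑σ) p) := by
  rw [permO]
  erw [dif_pos h]
  rfl

theorem mem_fixedO_iff (p : ℕ) (r : O k n (Vi k n p)) :
    r ∈ fixedO k n p ↔ permO k n (simple n p) (Vi k n p) r = r := Iff.rfl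

/-! Fin casting helpers -/

theorem finCast_val (m : ℕ) (hm : m ≤ n) : (((m : ℕ) : Fin (n + 1)) : ℕ) = m :=
  Fin.val_cast_of_lt (by omega)

theorem finCast_ne {a b : ℕ} (ha : a ≤ n) (hb : b ≤ n) (hab : a ≠ b) :
    ((a : ℕ) : Fin (n + 1)) ≠ ((b : ℕ) : Fin (n + 1)) := fun h =>
  hab (by rw [← finCast_val n a ha, ← finCast_val n b hb, h])

/-! Basic facts about Weyl lines. -/

theorem sum_eq_zero_of_mem_weyl {L : Set (Fin (n + 1) → k)} (hL : IsWeylLine k n L)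
    {x : Fin (n + 1) → k} (hx : x ∈ L) : (∑ m, x m) = 0 := by
  obtain ⟨-, T, -, hTL⟩ := hL
  rw [hTL] at hx
  exact hx.1

theorem line_const {L : Set (Fin (n + 1) → k)} (hL : IsWeylLine k n L)
    {x : Fin (n + 1) → k} (hx : x ∈ L) (hx0 : x ≠ 0) {a b : Fin (n + 1)}
    (hab : x a = x b) : ∀ z ∈ L, z a = z b := by
  obtain ⟨⟨v, hv0, hvL⟩, -⟩ := hL
  rw [hvL] at hx
  obtain ⟨c, hc⟩ := hx
  have hc' : c • v = x := hc
  intro z hz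
  rw [hvL] at hz
  obtain ⟨d, hd⟩ := hz
  have hd' : d • v = z := hd
  have hc0 : c ≠ 0 := by
    rintro rfl
    apply hx0
    rw [← hc', zero_smul]
  have hva : c * v a = c * v b := by
    have h1 : c * v a = x a := by rw [← hc']; rfl
    have h2 : c * v b = x b := by rw [← hc']; rfl
    rw [h1, h2, hab]
  have hv : v a = v b := mul_left_cancel₀ hc0 hva
  calc z a = d * v a := by rw [← hd']; rfl
    _ = d * v b := by rw [hv]
    _ = z b := by rw [← hd']; rfl

theorem line_subset_Hyp {L : Set (Fin (n + 1) → k)} (hL : IsWeylLine k n L)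
    {x : Fin (n + 1) → k} (hx : x ∈ L) (hx0 : x ≠ 0) {a b : Fin (n + 1)}
    (hab : x a = x b) : L ⊆ Hyp k n (Equiv.swap a b) := by
  intro z hz
  refine ⟨sum_eq_zero_of_mem_weyl k n hL hz, ?_⟩
  intro i
  have hzab := line_const k n hL hx hx0 hab z hz
  rcases eq_or_ne i a with rfl | hia
  · rw [Equiv.swap_apply_left]; exact hzab.symm
  rcases eq_or_ne i b with rfl | hib
  · rw [Equiv.swap_apply_right]; exact hzab
  · rw [Equiv.swap_apply_of_ne_of_ne hia hib]

theorem exists_ne_of_not_subset_Hyp {L : Set (Fin (n + 1) → k)} (hL : IsWeylLine k n L)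
    {a b : Fin (n + 1)} (h : ¬L ⊆ Hyp k n (Equiv.swap a b)) :
    ∃ z ∈ L, z a ≠ z b := by
  by_contra hc
  push_neg at hc
  refine h fun z hz => ⟨sum_eq_zero_of_mem_weyl k n hL hz, fun i => ?_⟩
  have hzab := hc z hz
  rcases eq_or_ne i a with rfl | hia
  · rw [Equiv.swap_apply_left]; exact hzab.symm
  rcases eq_or_ne i b with rfl | hib
  · rw [Equiv.swap_apply_right]; exact hzab
  · rw [Equiv.swap_apply_of_ne_of_ne hia hib]

theorem mem_Vt_elim {t : Equiv.Perm (Fin (n + 1))} {x : Fin (n + 1) → k}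
    (hx : x ∈ Vt k n t) : ∃ L, IsWeylLine k n L ∧ ¬L ⊆ Hyp k n t ∧ x ∈ L := by
  obtain ⟨L, hL, hxL⟩ := Set.mem_iUnion₂.1 hx
  exact ⟨L, hL.1, hL.2, hxL⟩

theorem mem_Vt_intro {t : Equiv.Perm (Fin (n + 1))} {L : Set (Fin (n + 1) → k)}
    (hL : IsWeylLine k n L) (hLH : ¬L ⊆ Hyp k n t) {x : Fin (n + 1) → k} (hx : x ∈ L) :
    x ∈ Vt k n t :=
  Set.mem_iUnion₂.2 ⟨L, ⟨hL, hLH⟩, hx⟩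

theorem mem_Vt_of_point {L : Set (Fin (n + 1) → k)} (hL : IsWeylLine k n L)
    {x : Fin (n + 1) → k} (hx : x ∈ L) {a b : Fin (n + 1)} (hne : x a ≠ x b) :
    x ∈ Vt k n (Equiv.swap a b) := by
  refine mem_Vt_intro k n hL (fun hsub => ?_) hx
  have := (hsub hx).2 b
  rw [Equiv.swap_apply_right] at this
  exact hne this

end Plumbing

noncomputable section Geometry2

open MvPolynomial
open Fin.NatCast

variable (k : Type) [Field k] [CharZero k] (n : ℕ)

/-- The image of a Weyl line under a coordinate permutation is a Weyl line. -/
theorem isWeylLine_image (σ : Equiv.Perm (Fin (n + 1))) {L : Set (Fin (n + 1) → k)}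
    (hL : IsWeylLine k n L) : IsWeylLine k n ((fun z => z ∘ ⇑σ) '' L) := by
  obtain ⟨⟨v, hv0, hvL⟩, T, hTt, hTL⟩ := hL
  constructor
  · refine ⟨v ∘ ⇑σ, ?_, ?_⟩
    · intro h
      apply hv0
      funext m
      have := congrFun h (σ.symm m)
      simpa using this
    · rw [hvL]
      ext y
      constructor
      · rintro ⟨x, ⟨c, rfl⟩, rfl⟩
        exact ⟨c, rfl⟩
      · rintro ⟨c, rfl⟩
        exact ⟨c • v, ⟨c, rfl⟩, rfl⟩
  · refine ⟨(fun t => (σ.trans t).trans σ.symm) '' T, ?_, ?_⟩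
    · rintro t' ⟨t, ht, rfl⟩
      obtain ⟨a, b, hab, rfl⟩ := hTt t ht
      refine ⟨σ.symm a, σ.symm b, fun h => hab (σ.symm.injective h), ?_⟩
      show (σ.trans (Equiv.swap a b)).trans σ.symm = _
      rw [Equiv.trans_swap_trans_symm]
    · ext y
      constructor
      · rintro ⟨x, hx, rfl⟩
        rw [hTL] at hx
        obtain ⟨hsum, hint⟩ := hx
        have hX : ∀ t ∈ T, x ∈ Hyp k n t := by
          intro t ht
          exact Set.mem_iInter₂.1 hint t ht
        constructor
        · show (∑ m, x (σ m)) = 0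
          rw [Equiv.sum_comp σ x]
          exact hsum
        · refine Set.mem_iInter₂.2 ?_
          rintro t' ⟨t, ht, rfl⟩
          refine ⟨?_, ?_⟩
          · show (∑ m, x (σ m)) = 0
            rw [Equiv.sum_comp σ x]
            exact hsum
          · intro i
            show x (σ (σ.symm (t (σ i)))) = x (σ i)
            rw [Equiv.apply_symm_apply]
            exact (hX t ht).2 (σ i)
      · rintro ⟨hsum, hint⟩
        refine ⟨y ∘ ⇑σ.symm, ?_, ?_⟩
        · rw [hTL]
          refine ⟨?_, ?_⟩
          · show (∑ m, y (σ.symm m)) = 0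
            rw [Equiv.sum_comp σ.symm y]
            exact hsum
          · refine Set.mem_iInter₂.2 ?_
            intro t ht
            have hy : y ∈ Hyp k n ((σ.trans t).trans σ.symm) :=
              Set.mem_iInter₂.1 hint _ ⟨t, ht, rfl⟩
            refine ⟨?_, ?_⟩
            · show (∑ m, y (σ.symm m)) = 0
              rw [Equiv.sum_comp σ.symm y]
              exact hsum
            · intro m
              show y (σ.symm (t m)) = y (σ.symm m)
              have := hy.2 (σ.symm m)
              simp only [Equiv.trans_apply, Equiv.apply_symm_apply] at this
              exact this
        · funext m
          show y (σ.symm (σ m)) = y m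
          rw [Equiv.symm_apply_apply]

/-- `V_p` is stable under `s_p`. -/
theorem Vi_stable (p : ℕ) : ∀ x ∈ Vi k n p, x ∘ ⇑(simple n p) ∈ Vi k n p := by
  intro x hx
  obtain ⟨L, hL, hLH, hxL⟩ := mem_Vt_elim k n hx
  refine mem_Vt_intro k n (isWeylLine_image k n (simple n p) hL) ?_ ⟨x, hxL, rfl⟩
  intro hsub
  apply hLH
  intro z hz
  have hzs : z ∘ ⇑(simple n p) ∈ Hyp k n (simple n p) := hsub ⟨z, hz, rfl⟩
  obtain ⟨hsum, hcond⟩ := hzs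
  refine ⟨?_, ?_⟩
  · have : (∑ m, z (simple n p m)) = 0 := hsum
    rw [Equiv.sum_comp] at this
    exact this
  · intro i
    show z ((simple n p) i) = z i
    have hss : ∀ m, (simple n p) ((simple n p) m) = m := fun m =>
      Equiv.swap_apply_self _ _ m
    have h' : z ((simple n p) ((simple n p) i)) = z ((simple n p) i) := hcond i
    rw [hss i] at h'
    exact h'.symm

/-- Two Weyl lines through a common nonzero point coincide. -/
theorem weyl_line_eq {L₁ L₂ : Set (Fin (n + 1) → k)} (h₁ : IsWeylLine k n L₁)
    (h₂ : IsWeylLine k n L₂) {x : Fin (n + 1) → k} (hx₁ : x ∈ L₁) (hx₂ : x ∈ L₂)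
    (hx0 : x ≠ 0) : L₁ = L₂ := by
  have key : ∀ L : Set (Fin (n + 1) → k), IsWeylLine k n L → x ∈ L →
      L = Set.range fun c : k => c • x := by
    intro L hL hxL
    obtain ⟨⟨v, hv0, hvL⟩, -⟩ := hL
    rw [hvL] at hxL
    obtain ⟨c, hc⟩ := hxL
    have hc' : c • v = x := hc
    have hc0 : c ≠ 0 := by
      rintro rfl
      exact hx0 (by rw [← hc', zero_smul])
    rw [hvL]
    ext z
    constructor
    · rintro ⟨d, rfl⟩
      refine ⟨d * c⁻¹, ?_⟩
      show (d * c⁻¹) • x = d • v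
      rw [← hc', smul_smul, mul_assoc, inv_mul_cancel₀ hc0, mul_one]
    · rintro ⟨d, rfl⟩
      refine ⟨d * c, ?_⟩
      show (d * c) • v = d • x
      rw [← hc', smul_smul]
  rw [key L₁ h₁ hx₁, key L₂ h₂ hx₂]

end Geometry2

noncomputable section Geometry3

open MvPolynomial
open Fin.NatCast

variable (k : Type) [Field k] [CharZero k] (n : ℕ)

/-- `0` lies on some Weyl line transverse to `s_p`. -/
theorem zero_mem_Vi (p : ℕ) (hp : p < n) : (0 : Fin (n + 1) → k) ∈ Vi k n p := by
  classical
  set pF : Fin (n + 1) := ((p : ℕ) : Fin (n + 1)) with hpF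
  set qF : Fin (n + 1) := (((p + 1 : ℕ)) : Fin (n + 1)) with hqF
  have hpq : pF ≠ qF := finCast_ne n (le_of_lt hp) (by omega) (by omega)
  have hn0 : ((n : k)) + 1 ≠ 0 := by
    have : ((n + 1 : ℕ) : k) ≠ 0 := Nat.cast_ne_zero.2 (by omega)
    simpa using this
  set v : Fin (n + 1) → k := fun m => (if m = pF then ((n : k) + 1) else 0) - 1 with hv
  have hvp : v pF = (n : k) := by simp [hv]
  have hvo : ∀ m, m ≠ pF → v m = -1 := by
    intro m hm
    simp [hv, hm]
  have hv0 : v ≠ 0 := by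
    intro h
    have h1 : v pF = 0 := by rw [h]; rfl
    rw [hvp] at h1
    exact (Nat.cast_ne_zero.2 (by omega : n ≠ 0)) h1
  set T : Set (Equiv.Perm (Fin (n + 1))) :=
    {t | ∃ a b : Fin (n + 1), a ≠ b ∧ a ≠ pF ∧ b ≠ pF ∧ t = Equiv.swap a b} with hT
  set L : Set (Fin (n + 1) → k) := Set.range fun c : k => c • v with hL
  have hsumv : (∑ m, v m) = 0 := by
    have h1 : (∑ m, v m) = (∑ m : Fin (n + 1), ((if m = pF then ((n : k) + 1) else 0))) -
        (∑ _m : Fin (n + 1), (1 : k)) := by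
      rw [← Finset.sum_sub_distrib]
    rw [h1, Finset.sum_ite_eq' Finset.univ pF (fun _ => ((n : k) + 1))]
    simp [Finset.card_univ]
  have hLeq : L = {x | (∑ i, x i) = 0} ∩ ⋂ t ∈ T, Hyp k n t := by
    ext x
    constructor
    · rintro ⟨c, rfl⟩
      refine ⟨?_, ?_⟩
      · show (∑ m, c * v m) = 0
        rw [← Finset.mul_sum, hsumv, mul_zero]
      · refine Set.mem_iInter₂.2 ?_
        rintro t ⟨a, b, hab, hA, hB, rfl⟩
        refine ⟨?_, ?_⟩
        · show (∑ m, c * v m) = 0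
          rw [← Finset.mul_sum, hsumv, mul_zero]
        · intro i
          show c * v (Equiv.swap a b i) = c * v i
          congr 1
          rcases eq_or_ne i a with rfl | hia
          · rw [Equiv.swap_apply_left, hvo b hB, hvo i hA]
          rcases eq_or_ne i b with rfl | hib
          · rw [Equiv.swap_apply_right, hvo a hA, hvo i hB]
          · rw [Equiv.swap_apply_of_ne_of_ne hia hib]
    · rintro ⟨hsum, hint⟩
      have hx : ∀ a b : Fin (n + 1), a ≠ pF → b ≠ pF → x a = x b := by
        intro a b hA hB
        rcases eq_or_ne a b with rfl | hab
        · rfl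
        have hmem : x ∈ Hyp k n (Equiv.swap a b) :=
          Set.mem_iInter₂.1 hint _ ⟨a, b, hab, hA, hB, rfl⟩
        have := hmem.2 b
        rw [Equiv.swap_apply_right] at this
        exact this
      refine ⟨-(x qF), ?_⟩
      show -(x qF) • v = x
      funext m
      show -(x qF) * v m = x m
      rcases eq_or_ne m pF with hm | hm
      · rw [hm, hvp]
        have hsplit : x pF + (∑ m' ∈ Finset.univ.erase pF, x m') = 0 := by
          rw [Finset.add_sum_erase Finset.univ x (Finset.mem_univ pF)]
          exact hsum
        have hconst : (∑ m' ∈ Finset.univ.erase pF, x m') = (n : k) * x qF := by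
          have hc : ∀ m' ∈ Finset.univ.erase pF, x m' = x qF := by
            intro m' hm'
            exact hx m' qF (Finset.ne_of_mem_erase hm') hpq.symm
          rw [Finset.sum_congr rfl hc, Finset.sum_const, Finset.card_erase_of_mem
            (Finset.mem_univ pF), Finset.card_univ, Fintype.card_fin]
          simp [nsmul_eq_mul]
        have hxp : x pF = -((n : k) * x qF) := by linear_combination hsplit - hconst
        rw [hxp]; ring
      · rw [hvo m hm]
        have hxm : x m = x qF := hx m qF hm hpq.symm
        rw [hxm]; ring
  have hWL : IsWeylLine k n L := by
    refine ⟨⟨v, hv0, rfl⟩, T, ?_, hLeq⟩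
    rintro t ⟨a, b, hab, _, _, rfl⟩
    exact ⟨a, b, hab, rfl⟩
  have hnot : ¬ L ⊆ Hyp k n (simple n p) := by
    intro hsub
    have hvL : v ∈ L := ⟨1, one_smul _ _⟩
    have := (hsub hvL).2 qF
    have hq : (simple n p) qF = pF := by
      show Equiv.swap pF qF qF = pF
      rw [Equiv.swap_apply_right]
    rw [hq] at this
    rw [hvp, hvo qF hpq.symm] at this
    exact hn0 (by linear_combination this)
  exact mem_Vt_intro k n hWL hnot ⟨0, zero_smul _ _⟩

end Geometry3

noncomputable section Geometry4

open MvPolynomial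
open Fin.NatCast

variable (k : Type) [Field k] [CharZero k] (n : ℕ)

/-- On `V_p ∩ V_{p+1}`, the coordinates `p` and `p+2` agree. -/
theorem coord_rel (p : ℕ) (hp : p < n) (hq : p + 1 < n) :
    ∀ x ∈ Vi k n p ∩ Vi k n (p + 1),
      x ((p : ℕ) : Fin (n + 1)) = x (((p + 2 : ℕ)) : Fin (n + 1)) := by
  classical
  intro x hx
  obtain ⟨hxp, hxq⟩ := hx
  by_cases hx0 : x = 0
  · rw [hx0]; rfl
  obtain ⟨L₁, hL₁, hH₁, hxL₁⟩ := mem_Vt_elim k n hxp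
  obtain ⟨L₂, hL₂, hH₂, hxL₂⟩ := mem_Vt_elim k n hxq
  have hLL : L₂ = L₁ := weyl_line_eq k n hL₂ hL₁ hxL₂ hxL₁ hx0
  rw [hLL] at hH₂
  set p0 : Fin (n + 1) := ((p : ℕ) : Fin (n + 1)) with hp0
  set p1 : Fin (n + 1) := (((p + 1 : ℕ)) : Fin (n + 1)) with hp1
  set p2 : Fin (n + 1) := (((p + 2 : ℕ)) : Fin (n + 1)) with hp2
  set E : Fin (n + 1) → Fin (n + 1) → Prop := fun a b => ∀ z ∈ L₁, z a = z b with hE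
  have hEsymm : ∀ {a b}, E a b → E b a := fun h z hz => (h z hz).symm
  have hEtrans : ∀ {a b c}, E a b → E b c → E a c := fun h1 h2 z hz =>
    (h1 z hz).trans (h2 z hz)
  have hE1 : ¬E p0 p1 := by
    obtain ⟨z, hz, hne⟩ := exists_ne_of_not_subset_Hyp k n hL₁ hH₁
    exact fun hE' => hne (hE' z hz)
  have hE2 : ¬E p1 p2 := by
    obtain ⟨z, hz, hne⟩ := exists_ne_of_not_subset_Hyp k n hL₁
      (show ¬L₁ ⊆ Hyp k n (Equiv.swap p1 (((p + 1 + 1 : ℕ)) : Fin (n + 1))) from hH₂)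
    exact fun hE' => hne (hE' z hz)
  by_contra hne
  have hE3 : ¬E p0 p2 := fun hE' => hne (hE' x hxL₁)
  obtain ⟨⟨v, hv0, hvL⟩, T, hTt, hTL⟩ := hL₁
  have hsub : ∀ t ∈ T, ∀ z ∈ L₁, z ∈ Hyp k n t := by
    intro t ht z hz
    rw [hTL] at hz
    exact Set.mem_iInter₂.1 hz.2 t ht
  -- cardinality of the `E`-class of `a`
  set cd : Fin (n + 1) → k := fun a => ((Finset.univ.filter fun m => E a m).card : k)
    with hcd
  have hcd_ne : ∀ a, cd a ≠ 0 := by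
    intro a
    have hmem : a ∈ Finset.univ.filter fun m => E a m := by
      simp only [Finset.mem_filter, Finset.mem_univ, true_and]
      exact fun z _ => rfl
    have hpos : 0 < (Finset.univ.filter fun m => E a m).card :=
      Finset.card_pos.2 ⟨a, hmem⟩
    exact Nat.cast_ne_zero.2 (Nat.pos_iff_ne_zero.1 hpos)
  -- the auxiliary vectors
  have build : ∀ b : Fin (n + 1), ¬E p0 b →
      (fun m => (if E p0 m then cd b else 0) - (if E b m then cd p0 else 0)) ∈ L₁ := by
    intro b hb
    set y : Fin (n + 1) → k :=
      fun m => (if E p0 m then cd b else 0) - (if E b m then cd p0 else 0) with hy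
    have hyc : ∀ {m m'}, E m m' → y m = y m' := by
      intro m m' hmm'
      have h1 : E p0 m ↔ E p0 m' := ⟨fun h => hEtrans h hmm', fun h => hEtrans h (hEsymm hmm')⟩
      have h2 : E b m ↔ E b m' := ⟨fun h => hEtrans h hmm', fun h => hEtrans h (hEsymm hmm')⟩
      simp only [hy, h1, h2]
    have hsum0 : ∀ (a : Fin (n + 1)) (c : k),
        (∑ m, (if E a m then c else 0)) = cd a * c := by
      intro a c
      rw [← Finset.sum_filter, Finset.sum_const, hcd]
      simp [nsmul_eq_mul]
    have hysum : (∑ m, y m) = 0 := by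
      rw [hy]
      rw [Finset.sum_sub_distrib, hsum0 p0 (cd b), hsum0 b (cd p0), mul_comm, sub_self]
    rw [hTL]
    refine ⟨hysum, Set.mem_iInter₂.2 ?_⟩
    intro t ht
    obtain ⟨a', b', hab', rfl⟩ := hTt t ht
    have hEab : E a' b' := by
      intro z hz
      have := (hsub _ ht z hz).2 b'
      rw [Equiv.swap_apply_right] at this
      exact this
    refine ⟨hysum, ?_⟩
    intro i
    rcases eq_or_ne i a' with rfl | hia
    · rw [Equiv.swap_apply_left]
      exact hyc (hEsymm hEab)
    rcases eq_or_ne i b' with rfl | hib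
    · rw [Equiv.swap_apply_right]
      exact hyc hEab
    · rw [Equiv.swap_apply_of_ne_of_ne hia hib]
  have hmemrange : ∀ z ∈ L₁, ∃ d : k, d • v = z := by
    intro z hz
    rw [hvL] at hz
    exact hz
  -- instantiate at p1 and p2
  have hb1 := build p1 hE1
  have hb2 := build p2 hE3
  obtain ⟨d1, hd1⟩ := hmemrange _ hb1
  obtain ⟨d2, hd2⟩ := hmemrange _ hb2
  have hy1p0 : d1 * v p0 = cd p1 := by
    have := congrFun hd1 p0
    simp only [Pi.smul_apply, smul_eq_mul] at this
    rw [if_pos (fun z _ => rfl : E p0 p0), if_neg (fun h => hE1 (hEsymm h))] at this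
    simpa using this
  have hy1p1 : d1 * v p1 = -cd p0 := by
    have := congrFun hd1 p1
    simp only [Pi.smul_apply, smul_eq_mul] at this
    rw [if_neg hE1, if_pos (fun z _ => rfl : E p1 p1)] at this
    simpa using this
  have hy2p0 : d2 * v p0 = cd p2 := by
    have := congrFun hd2 p0
    simp only [Pi.smul_apply, smul_eq_mul] at this
    rw [if_pos (fun z _ => rfl : E p0 p0), if_neg (fun h => hE3 (hEsymm h))] at this
    simpa using this
  have hy2p1 : d2 * v p1 = 0 := by
    have := congrFun hd2 p1
    simpa [if_neg hE1, if_neg (fun h => hE2 (hEsymm h))] using this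
  have hd1ne : d1 ≠ 0 := by
    intro h
    rw [h, zero_mul] at hy1p0
    exact hcd_ne p1 hy1p0.symm
  have hd2ne : d2 ≠ 0 := by
    intro h
    rw [h, zero_mul] at hy2p0
    exact hcd_ne p2 hy2p0.symm
  have hvp1ne : v p1 ≠ 0 := by
    intro h
    rw [h, mul_zero] at hy1p1
    exact hcd_ne p0 (by linear_combination hy1p1)
  exact (mul_ne_zero hd2ne hvp1ne) hy2p1

/-- Dichotomy: every point of `V_p` lies in `V_p ∩ V_q` or is moved there by `s_p`
(for adjacent `p`, `q`). -/
theorem dichotomy (p q : ℕ) (hp : p < n) (hq : q < n) (hpq : p = q + 1 ∨ q = p + 1) :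
    ∀ x ∈ Vi k n p, x ∈ Vi k n p ∩ Vi k n q ∨
      x ∘ ⇑(simple n p) ∈ Vi k n p ∩ Vi k n q := by
  intro x hx
  by_cases hx0 : x = 0
  · exact Or.inl ⟨hx, by rw [hx0]; exact zero_mem_Vi k n q hq⟩
  obtain ⟨L, hL, hLH, hxL⟩ := mem_Vt_elim k n hx
  set pF : Fin (n + 1) := ((p : ℕ) : Fin (n + 1)) with hpF
  set pF1 : Fin (n + 1) := (((p + 1 : ℕ)) : Fin (n + 1)) with hpF1
  set qF : Fin (n + 1) := ((q : ℕ) : Fin (n + 1)) with hqF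
  set qF1 : Fin (n + 1) := (((q + 1 : ℕ)) : Fin (n + 1)) with hqF1
  by_cases hqx : x qF = x qF1
  · -- x is moved into the intersection by s_p
    right
    have hpx : x pF ≠ x pF1 := by
      intro h
      exact hLH (line_subset_Hyp k n hL hxL hx0 h)
    set y : Fin (n + 1) → k := x ∘ ⇑(simple n p) with hy
    have hyL : y ∈ (fun z => z ∘ ⇑(simple n p)) '' L := ⟨x, hxL, rfl⟩
    have hLw : IsWeylLine k n ((fun z => z ∘ ⇑(simple n p)) '' L) :=
      isWeylLine_image k n _ hL
    have hyP : ∀ m : Fin (n + 1), y m = x (Equiv.swap pF pF1 m) := fun m => rfl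
    have hswpleft : Equiv.swap pF pF1 pF = pF1 := Equiv.swap_apply_left _ _
    have hswpright : Equiv.swap pF pF1 pF1 = pF := Equiv.swap_apply_right _ _
    have hyp' : y ∈ Vi k n p := by
      refine mem_Vt_of_point k n hLw hyL (a := pF) (b := pF1) ?_
      rw [hyP pF, hyP pF1, hswpleft, hswpright]
      exact fun h => hpx h.symm
    have hyq : y ∈ Vi k n q := by
      refine mem_Vt_of_point k n hLw hyL (a := qF) (b := qF1) ?_
      rcases hpq with hcase | hcase
      · -- p = q + 1 : pF = qF1, q ∉ {p, p+1}
        have hq1 : qF1 = pF := by rw [hqF1, hpF, hcase]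
        have hqne1 : qF ≠ pF := finCast_ne n (le_of_lt hq) (le_of_lt hp) (by omega)
        have hqne2 : qF ≠ pF1 := finCast_ne n (le_of_lt hq) hp (by omega)
        rw [hyP qF, hyP qF1, hq1, hswpleft, Equiv.swap_apply_of_ne_of_ne hqne1 hqne2]
        -- goal : x qF ≠ x pF1 ; note x qF = x qF1 = x pF
        rw [hqx]
        rw [← hq1] at hpx
        exact hpx
      · -- q = p + 1 : qF = pF1, q+1 = p+2 ∉ {p, p+1}
        have hq1 : qF = pF1 := by rw [hqF, hpF1, hcase]
        have hqne1 : qF1 ≠ pF := finCast_ne n hq (le_of_lt hp) (by omega)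
        have hqne2 : qF1 ≠ pF1 := finCast_ne n hq hp (by omega)
        rw [hyP qF, hyP qF1, hq1, hswpright, Equiv.swap_apply_of_ne_of_ne hqne1 hqne2]
        -- goal : x pF ≠ x qF1 ; know x qF = x qF1 i.e. x pF1 = x qF1
        rw [hq1] at hqx
        -- hqx : x pF1 = x qF1
        intro h
        exact hpx (h.trans hqx.symm)
    exact ⟨hyp', hyq⟩
  · -- x itself is in the intersection
    exact Or.inl ⟨hx, mem_Vt_of_point k n hL hxL hqx⟩

end Geometry4

noncomputable section Bijectivity

open MvPolynomial
open Fin.NatCast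

variable (k : Type) [Field k] [CharZero k] (n : ℕ)

theorem mem_fixedO_of_invariant (p : ℕ) {h : MvPolynomial (Fin (n + 1)) k}
    (hinv : MvPolynomial.rename (⇑(simple n p)) h = h) :
    mkO k n (Vi k n p) h ∈ fixedO k n p := by
  show permO k n (simple n p) (Vi k n p) (mkO k n (Vi k n p) h) = mkO k n (Vi k n p) h
  rw [permO_mkO k n _ _ (Vi_stable k n p), hinv]

/-- The key bijectivity lemma: restriction from the `s_p`-invariants of `O(V_p)`
to `O(W)` is bijective, given the relation witness `g` and the dichotomy. -/
theorem bij_fix_res (p : ℕ) (hp : p < n) (W : Set (Fin (n + 1) → k)) (hW : W ⊆ Vi k n p)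
    (g : MvPolynomial (Fin (n + 1)) k)
    (hginv : MvPolynomial.rename (⇑(simple n p)) g = g)
    (hgW : ∀ x ∈ W, MvPolynomial.eval x g =
      x ((p : ℕ) : Fin (n + 1)) - x (((p + 1 : ℕ)) : Fin (n + 1)))
    (hdich : ∀ x ∈ Vi k n p, x ∈ W ∨ x ∘ ⇑(simple n p) ∈ W) :
    Function.Bijective ((res k n hW).comp (fixedO k n p).subtype) := by
  have hstab := Vi_stable k n p
  set pF : Fin (n + 1) := ((p : ℕ) : Fin (n + 1)) with hpF
  set pF1 : Fin (n + 1) := (((p + 1 : ℕ)) : Fin (n + 1)) with hpF1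
  have hpne : pF ≠ pF1 := finCast_ne n (le_of_lt hp) hp (by omega)
  constructor
  · -- injectivity
    rw [injective_iff_map_eq_zero]
    intro r hr
    obtain ⟨q, hq⟩ := mkO_surjective k n (Vi k n p) (r : O k n (Vi k n p))
    have hfix : permO k n (simple n p) (Vi k n p) (r : O k n (Vi k n p)) =
        (r : O k n (Vi k n p)) := r.2
    rw [← hq, permO_mkO k n _ _ hstab] at hfix
    have hinv : ∀ x ∈ Vi k n p, MvPolynomial.eval (x ∘ ⇑(simple n p)) q =
        MvPolynomial.eval x q := by
      intro x hx
      have := (mkO_eq_iff k n (Vi k n p) _ _).1 hfix x hx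
      rw [map_sub, sub_eq_zero] at this
      rw [← this, MvPolynomial.eval_rename]
    have hW0 : ∀ x ∈ W, MvPolynomial.eval x q = 0 := by
      have : res k n hW (r : O k n (Vi k n p)) = 0 := hr
      rw [← hq, res_mkO] at this
      exact (mkO_eq_zero_iff k n W q).1 this
    have : (r : O k n (Vi k n p)) = 0 := by
      rw [← hq]
      rw [mkO_eq_zero_iff]
      intro x hx
      rcases hdich x hx with hxW | hxW
      · exact hW0 x hxW
      · rw [← hinv x hx]
        exact hW0 _ hxW
    exact Subtype.ext this
  · -- surjectivity
    intro z
    obtain ⟨q, rfl⟩ := mkO_surjective k n W z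
    suffices h : ∀ q₀ : MvPolynomial (Fin (n + 1)) k,
        ∃ r : fixedO k n p, ((res k n hW).comp (fixedO k n p).subtype) r = mkO k n W q₀ by
      exact h q
    have hXmem : ∀ m : Fin (n + 1), ∃ r : fixedO k n p,
        ((res k n hW).comp (fixedO k n p).subtype) r = mkO k n W (MvPolynomial.X m) := by
      intro m
      by_cases hm0 : m = pF
      · -- use (X p + X (p+1) + g)/2
        set h : MvPolynomial (Fin (n + 1)) k :=
          MvPolynomial.C (2⁻¹ : k) * (MvPolynomial.X pF + MvPolynomial.X pF1 + g) with hh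
        have hinv' : MvPolynomial.rename (⇑(simple n p)) h = h := by
          rw [hh, map_mul, map_add, map_add, MvPolynomial.rename_X, MvPolynomial.rename_X,
            MvPolynomial.rename_C, hginv]
          have h1 : (simple n p) pF = pF1 := Equiv.swap_apply_left _ _
          have h2 : (simple n p) pF1 = pF := Equiv.swap_apply_right _ _
          rw [h1, h2]
          ring
        refine ⟨⟨mkO k n (Vi k n p) h, mem_fixedO_of_invariant k n p hinv'⟩, ?_⟩
        show res k n hW (mkO k n (Vi k n p) h) = mkO k n W (MvPolynomial.X m)
        rw [res_mkO, mkO_eq_iff]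
        intro x hx
        rw [hm0]
        have h2ne : (2 : k) ≠ 0 := two_ne_zero
        simp only [hh, map_sub, map_mul, map_add, MvPolynomial.eval_C, MvPolynomial.eval_X]
        rw [hgW x hx]
        field_simp
        ring
      by_cases hm1 : m = pF1
      · -- use (X p + X (p+1) - g)/2
        set h : MvPolynomial (Fin (n + 1)) k :=
          MvPolynomial.C (2⁻¹ : k) * (MvPolynomial.X pF + MvPolynomial.X pF1 - g) with hh
        have hinv' : MvPolynomial.rename (⇑(simple n p)) h = h := by
          rw [hh, map_mul, map_sub, map_add, MvPolynomial.rename_X, MvPolynomial.rename_X,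
            MvPolynomial.rename_C, hginv]
          have h1 : (simple n p) pF = pF1 := Equiv.swap_apply_left _ _
          have h2 : (simple n p) pF1 = pF := Equiv.swap_apply_right _ _
          rw [h1, h2]
          ring
        refine ⟨⟨mkO k n (Vi k n p) h, mem_fixedO_of_invariant k n p hinv'⟩, ?_⟩
        show res k n hW (mkO k n (Vi k n p) h) = mkO k n W (MvPolynomial.X m)
        rw [res_mkO, mkO_eq_iff]
        intro x hx
        rw [hm1]
        simp only [hh, map_sub, map_mul, map_add, MvPolynomial.eval_C, MvPolynomial.eval_X]
        rw [hgW x hx]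
        field_simp
        ring
      · -- X m is itself invariant
        have hinv' : MvPolynomial.rename (⇑(simple n p)) (MvPolynomial.X m) =
            (MvPolynomial.X m : MvPolynomial (Fin (n + 1)) k) := by
          rw [MvPolynomial.rename_X]
          congr 1
          exact Equiv.swap_apply_of_ne_of_ne hm0 hm1
        refine ⟨⟨mkO k n (Vi k n p) (MvPolynomial.X m),
          mem_fixedO_of_invariant k n p hinv'⟩, ?_⟩
        show res k n hW (mkO k n (Vi k n p) (MvPolynomial.X m)) = mkO k n W (MvPolynomial.X m)
        rw [res_mkO]
    intro q₀
    induction q₀ using MvPolynomial.induction_on with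
    | C a =>
        refine ⟨⟨mkO k n (Vi k n p) (MvPolynomial.C a),
          mem_fixedO_of_invariant k n p (by rw [MvPolynomial.rename_C])⟩, ?_⟩
        show res k n hW (mkO k n (Vi k n p) (MvPolynomial.C a)) = mkO k n W (MvPolynomial.C a)
        rw [res_mkO]
    | add f1 f2 h1 h2 =>
        obtain ⟨r1, hr1⟩ := h1
        obtain ⟨r2, hr2⟩ := h2
        exact ⟨r1 + r2, by rw [map_add, hr1, hr2, map_add]⟩
    | mul_X f m hf =>
        obtain ⟨r1, hr1⟩ := hf
        obtain ⟨r2, hr2⟩ := hXmem m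
        exact ⟨r1 * r2, by rw [map_mul, hr1, hr2, map_mul]⟩

end Bijectivity

noncomputable section Instantiate

open MvPolynomial
open Fin.NatCast

variable (k : Type) [Field k] [CharZero k] (n : ℕ)

theorem fjM_bijective (i j : ℕ) (hi : i < n) (hj : j < n) (hadj : i = j + 1 ∨ j = i + 1) :
    Function.Bijective
      ((res k n (Set.inter_subset_right : Vi k n i ∩ Vi k n j ⊆ Vi k n j)).comp
        (fixedO k n j).subtype) := by
  rcases hadj with hcase | hcase
  · -- i = j + 1
    subst hcase
    have hrel : ∀ x ∈ Vi k n (j + 1) ∩ Vi k n j,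
        x ((j : ℕ) : Fin (n + 1)) = x (((j + 2 : ℕ)) : Fin (n + 1)) := fun x hx =>
      coord_rel k n j hj hi x ⟨hx.2, hx.1⟩
    refine bij_fix_res k n j hj _ Set.inter_subset_right
      (MvPolynomial.C 2 * MvPolynomial.X (((j + 2 : ℕ)) : Fin (n + 1)) -
        MvPolynomial.X ((j : ℕ) : Fin (n + 1)) -
        MvPolynomial.X (((j + 1 : ℕ)) : Fin (n + 1))) ?_ ?_ ?_
    · rw [map_sub, map_sub, map_mul, MvPolynomial.rename_C, MvPolynomial.rename_X,
        MvPolynomial.rename_X, MvPolynomial.rename_X]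
      have h1 : (simple n j) ((j : ℕ) : Fin (n + 1)) = (((j + 1 : ℕ)) : Fin (n + 1)) :=
        Equiv.swap_apply_left _ _
      have h2 : (simple n j) (((j + 1 : ℕ)) : Fin (n + 1)) = ((j : ℕ) : Fin (n + 1)) :=
        Equiv.swap_apply_right _ _
      have h3 : (simple n j) (((j + 2 : ℕ)) : Fin (n + 1)) = (((j + 2 : ℕ)) : Fin (n + 1)) :=
        Equiv.swap_apply_of_ne_of_ne
          (finCast_ne n (by omega) (by omega) (by omega))
          (finCast_ne n (by omega) (by omega) (by omega))
      rw [h1, h2, h3]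
      ring
    · intro x hx
      have hr := hrel x hx
      simp only [map_sub, map_mul, MvPolynomial.eval_C, MvPolynomial.eval_X]
      linear_combination (-2 : k) * hr
    · intro x hx
      rcases dichotomy k n j (j + 1) hj hi (Or.inr rfl) x hx with h | h
      · exact Or.inl ⟨h.2, h.1⟩
      · exact Or.inr ⟨h.2, h.1⟩
  · -- j = i + 1
    subst hcase
    have hrel : ∀ x ∈ Vi k n i ∩ Vi k n (i + 1),
        x ((i : ℕ) : Fin (n + 1)) = x (((i + 2 : ℕ)) : Fin (n + 1)) := fun x hx =>
      coord_rel k n i hi hj x hx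
    refine bij_fix_res k n (i + 1) hj _ Set.inter_subset_right
      (MvPolynomial.X (((i + 1 : ℕ)) : Fin (n + 1)) +
        MvPolynomial.X (((i + 2 : ℕ)) : Fin (n + 1)) -
        MvPolynomial.C 2 * MvPolynomial.X ((i : ℕ) : Fin (n + 1))) ?_ ?_ ?_
    · rw [map_sub, map_add, map_mul, MvPolynomial.rename_C, MvPolynomial.rename_X,
        MvPolynomial.rename_X, MvPolynomial.rename_X]
      have h1 : (simple n (i + 1)) (((i + 1 : ℕ)) : Fin (n + 1)) =
          (((i + 1 + 1 : ℕ)) : Fin (n + 1)) := Equiv.swap_apply_left _ _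
      have h2 : (simple n (i + 1)) (((i + 1 + 1 : ℕ)) : Fin (n + 1)) =
          (((i + 1 : ℕ)) : Fin (n + 1)) := Equiv.swap_apply_right _ _
      have h2' : (simple n (i + 1)) (((i + 2 : ℕ)) : Fin (n + 1)) =
          (((i + 1 : ℕ)) : Fin (n + 1)) := h2
      have h3 : (simple n (i + 1)) ((i : ℕ) : Fin (n + 1)) = ((i : ℕ) : Fin (n + 1)) :=
        Equiv.swap_apply_of_ne_of_ne
          (finCast_ne n (by omega) (by omega) (by omega))
          (finCast_ne n (by omega) (by omega) (by omega))
      rw [h1, h2', h3]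
      have hcast : (((i + 1 + 1 : ℕ)) : Fin (n + 1)) = (((i + 2 : ℕ)) : Fin (n + 1)) := rfl
      rw [hcast]
      ring
    · intro x hx
      have hr := hrel x hx
      show MvPolynomial.eval x _ =
        x (((i + 1 : ℕ)) : Fin (n + 1)) - x (((i + 2 : ℕ)) : Fin (n + 1))
      simp only [map_sub, map_add, map_mul, MvPolynomial.eval_C, MvPolynomial.eval_X]
      linear_combination (-2 : k) * hr
    · intro x hx
      rcases dichotomy k n (i + 1) i hj hi (Or.inl rfl) x hx with h | h
      · exact Or.inl ⟨h.2, h.1⟩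
      · exact Or.inr ⟨h.2, h.1⟩

theorem fiM_bijective (i j : ℕ) (hi : i < n) (hj : j < n) (hadj : i = j + 1 ∨ j = i + 1) :
    Function.Bijective
      ((res k n (Set.inter_subset_left : Vi k n i ∩ Vi k n j ⊆ Vi k n i)).comp
        (fixedO k n i).subtype) := by
  rcases hadj with hcase | hcase
  · -- i = j + 1
    subst hcase
    have hrel : ∀ x ∈ Vi k n (j + 1) ∩ Vi k n j,
        x ((j : ℕ) : Fin (n + 1)) = x (((j + 2 : ℕ)) : Fin (n + 1)) := fun x hx =>
      coord_rel k n j hj hi x ⟨hx.2, hx.1⟩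
    refine bij_fix_res k n (j + 1) hi _ Set.inter_subset_left
      (MvPolynomial.X (((j + 1 : ℕ)) : Fin (n + 1)) +
        MvPolynomial.X (((j + 2 : ℕ)) : Fin (n + 1)) -
        MvPolynomial.C 2 * MvPolynomial.X ((j : ℕ) : Fin (n + 1))) ?_ ?_ ?_
    · rw [map_sub, map_add, map_mul, MvPolynomial.rename_C, MvPolynomial.rename_X,
        MvPolynomial.rename_X, MvPolynomial.rename_X]
      have h1 : (simple n (j + 1)) (((j + 1 : ℕ)) : Fin (n + 1)) =
          (((j + 1 + 1 : ℕ)) : Fin (n + 1)) := Equiv.swap_apply_left _ _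
      have h2 : (simple n (j + 1)) (((j + 2 : ℕ)) : Fin (n + 1)) =
          (((j + 1 : ℕ)) : Fin (n + 1)) := Equiv.swap_apply_right _ _
      have h3 : (simple n (j + 1)) ((j : ℕ) : Fin (n + 1)) = ((j : ℕ) : Fin (n + 1)) :=
        Equiv.swap_apply_of_ne_of_ne
          (finCast_ne n (by omega) (by omega) (by omega))
          (finCast_ne n (by omega) (by omega) (by omega))
      rw [h1, h2, h3]
      have hcast : (((j + 1 + 1 : ℕ)) : Fin (n + 1)) = (((j + 2 : ℕ)) : Fin (n + 1)) := rfl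
      rw [hcast]
      ring
    · intro x hx
      have hr := hrel x hx
      show MvPolynomial.eval x _ =
        x (((j + 1 : ℕ)) : Fin (n + 1)) - x (((j + 2 : ℕ)) : Fin (n + 1))
      simp only [map_sub, map_add, map_mul, MvPolynomial.eval_C, MvPolynomial.eval_X]
      linear_combination (-2 : k) * hr
    · intro x hx
      exact dichotomy k n (j + 1) j hi hj (Or.inl rfl) x hx
  · -- j = i + 1
    subst hcase
    have hrel : ∀ x ∈ Vi k n i ∩ Vi k n (i + 1),
        x ((i : ℕ) : Fin (n + 1)) = x (((i + 2 : ℕ)) : Fin (n + 1)) := fun x hx =>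
      coord_rel k n i hi hj x hx
    refine bij_fix_res k n i hi _ Set.inter_subset_left
      (MvPolynomial.C 2 * MvPolynomial.X (((i + 2 : ℕ)) : Fin (n + 1)) -
        MvPolynomial.X ((i : ℕ) : Fin (n + 1)) -
        MvPolynomial.X (((i + 1 : ℕ)) : Fin (n + 1))) ?_ ?_ ?_
    · rw [map_sub, map_sub, map_mul, MvPolynomial.rename_C, MvPolynomial.rename_X,
        MvPolynomial.rename_X, MvPolynomial.rename_X]
      have h1 : (simple n i) ((i : ℕ) : Fin (n + 1)) = (((i + 1 : ℕ)) : Fin (n + 1)) :=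
        Equiv.swap_apply_left _ _
      have h2 : (simple n i) (((i + 1 : ℕ)) : Fin (n + 1)) = ((i : ℕ) : Fin (n + 1)) :=
        Equiv.swap_apply_right _ _
      have h3 : (simple n i) (((i + 2 : ℕ)) : Fin (n + 1)) = (((i + 2 : ℕ)) : Fin (n + 1)) :=
        Equiv.swap_apply_of_ne_of_ne
          (finCast_ne n (by omega) (by omega) (by omega))
          (finCast_ne n (by omega) (by omega) (by omega))
      rw [h1, h2, h3]
      ring
    · intro x hx
      have hr := hrel x hx
      simp only [map_sub, map_mul, MvPolynomial.eval_C, MvPolynomial.eval_X]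
      linear_combination (-2 : k) * hr
    · intro x hx
      exact dichotomy k n i (i + 1) hi hj (Or.inr rfl) x hx

end Instantiate

/-! Abstract lemmas about `RTensor`. -/

noncomputable section Abstract

open scoped TensorProduct

variable {R A A' B : Type} [CommRing R] [CommRing A] [CommRing A'] [CommRing B]

/-- The collapsing homomorphism `A ⊗_R B → A` when `g : R → B` is bijective. -/
noncomputable def RTensor.collapseHom (f : R →+* A) (g : R →+* B)
    (hg : Function.Bijective g) : RTensor R A B f g →+* A :=
  letI := f.toAlgebra
  letI := g.toAlgebra
  let ge : R ≃+* B := RingEquiv.ofBijective g hg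
  let ginv : B →ₐ[R] A :=
    { toRingHom := f.comp ge.symm.toRingHom
      commutes' := fun r => by
        exact congrArg f (ge.symm_apply_apply r) }
  (Algebra.TensorProduct.lift (AlgHom.id R A) ginv (fun a b => Commute.all _ _)).toRingHom

theorem RTensor.collapseHom_inl (f : R →+* A) (g : R →+* B) (hg : Function.Bijective g)
    (a : A) : RTensor.collapseHom f g hg (RTensor.inl R A B f g a) = a := by
  letI := f.toAlgebra
  letI := g.toAlgebra
  show (Algebra.TensorProduct.lift (AlgHom.id R A) _ (fun a b => Commute.all _ _))
      (a ⊗ₜ[R] (1:B)) = a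
  rw [Algebra.TensorProduct.lift_tmul]
  simp

theorem RTensor.collapseHom_inr (f : R →+* A) (g : R →+* B) (hg : Function.Bijective g)
    (b : B) : RTensor.collapseHom f g hg (RTensor.inr R A B f g b) =
      f ((RingEquiv.ofBijective g hg).symm b) := by
  letI := f.toAlgebra
  letI := g.toAlgebra
  show (Algebra.TensorProduct.lift (AlgHom.id R A) _ (fun a b => Commute.all _ _))
      ((1:A) ⊗ₜ[R] b) = _
  rw [Algebra.TensorProduct.lift_tmul]
  simp

/-- Collapse `A ⊗_R B ≅ A` when the structure map `g : R → B` is bijective. -/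
noncomputable def RTensor.collapse (f : R →+* A) (g : R →+* B) (hg : Function.Bijective g) :
    RTensor R A B f g ≃+* A :=
  RingEquiv.ofRingHom (RTensor.collapseHom f g hg) (RTensor.inl R A B f g)
    (h₂ := by
      letI := f.toAlgebra
      letI := g.toAlgebra
      apply RingHom.ext
      intro x
      have key : ∀ y : A ⊗[R] B,
          (RTensor.inl R A B f g) (RTensor.collapseHom f g hg y) = y := by
        intro y
        refine TensorProduct.induction_on y ?_ ?_ ?_
        · show (RTensor.inl R A B f g) (RTensor.collapseHom f g hg (0 : RTensor R A B f g)) =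
            (0 : RTensor R A B f g)
          simp only [map_zero]
        · intro a b
          have hb : b = g ((RingEquiv.ofBijective g hg).symm b) :=
            ((RingEquiv.ofBijective g hg).apply_symm_apply b).symm
          set r := (RingEquiv.ofBijective g hg).symm b with hr
          have h1 : RTensor.collapseHom f g hg (a ⊗ₜ[R] b) = a * f r := by
            show (Algebra.TensorProduct.lift (AlgHom.id R A) _ (fun a b => Commute.all _ _))
                (a ⊗ₜ[R] b) = a * f r
            rw [Algebra.TensorProduct.lift_tmul]
            rfl
          rw [h1]
          show (a * f r) ⊗ₜ[R] (1:B) = a ⊗ₜ[R] b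
          conv_rhs => rw [hb]
          have hg' : g r = r • (1 : B) := by
            rw [Algebra.smul_def, RingHom.algebraMap_toAlgebra, mul_one]
          rw [hg', TensorProduct.tmul_smul, TensorProduct.smul_tmul']
          congr 1
          rw [Algebra.smul_def, RingHom.algebraMap_toAlgebra]
          exact mul_comm _ _
        · intro x y hx hy
          exact (congrArg (RTensor.inl R A B f g) ((RTensor.collapseHom f g hg).map_add x y)).trans
            (((RTensor.inl R A B f g).map_add _ _).trans (by rw [hx, hy]; rfl))
      exact key x)
    (h₁ := by
      apply RingHom.ext
      intro a
      exact RTensor.collapseHom_inl f g hg a)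

theorem RTensor.collapse_apply (f : R →+* A) (g : R →+* B) (hg : Function.Bijective g)
    (x : RTensor R A B f g) :
    RTensor.collapse f g hg x = RTensor.collapseHom f g hg x := rfl

/-- Transport the left factor of `RTensor` along a ring isomorphism. -/
noncomputable def RTensor.congrLeft (f : R →+* A) (g : R →+* B) (f' : R →+* A')
    (e : A ≃+* A') (he : ∀ r, e (f r) = f' r) :
    RTensor R A B f g ≃+* RTensor R A' B f' g :=
  letI := f.toAlgebra
  letI := g.toAlgebra
  letI := f'.toAlgebra
  (Algebra.TensorProduct.congr
    (AlgEquiv.ofRingEquiv (f := e) (fun r => he r))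
    (AlgEquiv.refl (R := R) (A₁ := B))).toRingEquiv

theorem RTensor.congrLeft_inl (f : R →+* A) (g : R →+* B) (f' : R →+* A')
    (e : A ≃+* A') (he : ∀ r, e (f r) = f' r) (a : A) :
    RTensor.congrLeft f g f' e he (RTensor.inl R A B f g a) = RTensor.inl R A' B f' g (e a) := by
  letI := f.toAlgebra
  letI := g.toAlgebra
  letI := f'.toAlgebra
  show (Algebra.TensorProduct.map _ _) (a ⊗ₜ[R] (1:B)) = (e a) ⊗ₜ[R] (1:B)
  rw [Algebra.TensorProduct.map_tmul]
  simp

theorem RTensor.congrLeft_inr (f : R →+* A) (g : R →+* B) (f' : R →+* A')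
    (e : A ≃+* A') (he : ∀ r, e (f r) = f' r) (b : B) :
    RTensor.congrLeft f g f' e he (RTensor.inr R A B f g b) = RTensor.inr R A' B f' g b := by
  letI := f.toAlgebra
  letI := g.toAlgebra
  letI := f'.toAlgebra
  show (Algebra.TensorProduct.map _ _) ((1:A) ⊗ₜ[R] b) = (1:A') ⊗ₜ[R] b
  rw [Algebra.TensorProduct.map_tmul]
  simp

end Abstract


section Assemble

/-- Abstract form of the first Temperley–Lieb relation, given that both middle
structure maps are bijective. -/
theorem TL_assemble (Rj Ri OV M OZ : Type)
    [CommRing Rj] [CommRing Ri] [CommRing OV] [CommRing M] [CommRing OZ]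
    (subj : Rj →+* OV) (fjM : Rj →+* M) (fiM : Ri →+* M) (resj : OZ →+* OV)
    (hgj : Function.Bijective fjM) (hgi : Function.Bijective fiM) :
    ∃ e : RTensor Rj
        (RTensor Ri (RTensor Rj OV M subj fjM) M
          ((RTensor.inr Rj OV M subj fjM).comp fiM) fiM) OV
        ((RTensor.inr Ri (RTensor Rj OV M subj fjM) M
          ((RTensor.inr Rj OV M subj fjM).comp fiM) fiM).comp fjM) subj
        ≃+ RTensor Rj OV OV subj subj,
      (∀ (a : OZ) (x : RTensor Rj
          (RTensor Ri (RTensor Rj OV M subj fjM) M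
            ((RTensor.inr Rj OV M subj fjM).comp fiM) fiM) OV
          ((RTensor.inr Ri (RTensor Rj OV M subj fjM) M
            ((RTensor.inr Rj OV M subj fjM).comp fiM) fiM).comp fjM) subj),
        e ((((RTensor.inl Rj
            (RTensor Ri (RTensor Rj OV M subj fjM) M
              ((RTensor.inr Rj OV M subj fjM).comp fiM) fiM) OV
            ((RTensor.inr Ri (RTensor Rj OV M subj fjM) M
              ((RTensor.inr Rj OV M subj fjM).comp fiM) fiM).comp fjM) subj).comp
          ((RTensor.inl Ri (RTensor Rj OV M subj fjM) M
              ((RTensor.inr Rj OV M subj fjM).comp fiM) fiM).comp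
            (RTensor.inl Rj OV M subj fjM))).comp resj) a * x) =
          ((RTensor.inl Rj OV OV subj subj).comp resj) a * e x) ∧
      (∀ (a : OZ) (x : RTensor Rj
          (RTensor Ri (RTensor Rj OV M subj fjM) M
            ((RTensor.inr Rj OV M subj fjM).comp fiM) fiM) OV
          ((RTensor.inr Ri (RTensor Rj OV M subj fjM) M
            ((RTensor.inr Rj OV M subj fjM).comp fiM) fiM).comp fjM) subj),
        e (x * ((RTensor.inr Rj
            (RTensor Ri (RTensor Rj OV M subj fjM) M
              ((RTensor.inr Rj OV M subj fjM).comp fiM) fiM) OV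
            ((RTensor.inr Ri (RTensor Rj OV M subj fjM) M
              ((RTensor.inr Rj OV M subj fjM).comp fiM) fiM).comp fjM) subj).comp resj) a) =
          e x * ((RTensor.inr Rj OV OV subj subj).comp resj) a) := by
  set fiT1 : Ri →+* RTensor Rj OV M subj fjM :=
    (RTensor.inr Rj OV M subj fjM).comp fiM with hfiT1
  set T1 := RTensor Rj OV M subj fjM with hT1
  set T2 := RTensor Ri T1 M fiT1 fiM with hT2
  set fjT2 : Rj →+* T2 := (RTensor.inr Ri T1 M fiT1 fiM).comp fjM with hfjT2
  let c1 : T1 ≃+* OV := RTensor.collapse subj fjM hgj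
  let c2 : T2 ≃+* T1 := RTensor.collapse fiT1 fiM hgi
  let E : T2 ≃+* OV := c2.trans c1
  have hE : ∀ r : Rj, E (fjT2 r) = subj r := by
    intro r
    show c1 (c2 (RTensor.inr Ri T1 M fiT1 fiM (fjM r))) = subj r
    rw [RTensor.collapse_apply fiT1 fiM hgi, RTensor.collapseHom_inr fiT1 fiM hgi]
    show c1 (RTensor.inr Rj OV M subj fjM
      (fiM ((RingEquiv.ofBijective fiM hgi).symm (fjM r)))) = subj r
    rw [RTensor.collapse_apply subj fjM hgj, RTensor.collapseHom_inr subj fjM hgj]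
    have h1 : fiM ((RingEquiv.ofBijective fiM hgi).symm (fjM r)) = fjM r :=
      (RingEquiv.ofBijective fiM hgi).apply_symm_apply (fjM r)
    rw [h1]
    congr 1
    exact (RingEquiv.ofBijective fjM hgj).symm_apply_apply r
  let e3 : RTensor Rj T2 OV fjT2 subj ≃+* RTensor Rj OV OV subj subj :=
    RTensor.congrLeft fjT2 subj subj E hE
  have he3l : ∀ a : OZ,
      e3 (RTensor.inl Rj T2 OV fjT2 subj
        (RTensor.inl Ri T1 M fiT1 fiM (RTensor.inl Rj OV M subj fjM (resj a)))) =
      RTensor.inl Rj OV OV subj subj (resj a) := by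
    intro a
    rw [RTensor.congrLeft_inl]
    show RTensor.inl Rj OV OV subj subj
      (c1 (c2 (RTensor.inl Ri T1 M fiT1 fiM
        (RTensor.inl Rj OV M subj fjM (resj a))))) = _
    rw [RTensor.collapse_apply fiT1 fiM hgi, RTensor.collapseHom_inl fiT1 fiM hgi,
      RTensor.collapse_apply subj fjM hgj, RTensor.collapseHom_inl subj fjM hgj]
  have he3r : ∀ a : OZ,
      e3 (RTensor.inr Rj T2 OV fjT2 subj (resj a)) =
      RTensor.inr Rj OV OV subj subj (resj a) := by
    intro a
    rw [RTensor.congrLeft_inr]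
  refine ⟨e3.toAddEquiv, ?_, ?_⟩
  · intro a x
    show e3 (_ * x) = _ * e3 x
    rw [map_mul]
    congr 1
    exact he3l a
  · intro a x
    show e3 (x * _) = e3 x * _
    rw [map_mul]
    congr 1
    exact he3r a

end Assemble

/-- (0-indexed.)  For `|i − j| = 1` there is an isomorphism of
`(O(Z), O(Z))`-bimodules
`O(V_j) ⊗_{R_j} O(V_i ∩ V_j) ⊗_{R_i} O(V_i ∩ V_j) ⊗_{R_j} O(V_j) ≅ O(V_j) ⊗_{R_j} O(V_j)`
(`R_m := O(V_m)^{s_m}`), the `O(Z)`-actions being through the restrictions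
`O(Z) → O(V_j)` on the outer factors.  This is the first Temperley–Lieb relation
`B_j ∗ B_i ∗ B_j ≅ B_j` for `B_m := O(V_m) ⊗_{R_m} O(V_m)`. -/
theorem first_temperley_lieb_relation (i j : ℕ) (hi : i < n) (hj : j < n)
    (hadj : i = j + 1 ∨ j = i + 1) :
    letI M := O k n (Vi k n i ∩ Vi k n j)
    letI fjM : fixedO k n j →+* M :=
      (res k n (Set.inter_subset_right : Vi k n i ∩ Vi k n j ⊆ Vi k n j)).comp
        (fixedO k n j).subtype
    letI fiM : fixedO k n i →+* M :=
      (res k n (Set.inter_subset_left : Vi k n i ∩ Vi k n j ⊆ Vi k n i)).comp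
        (fixedO k n i).subtype
    letI subj : fixedO k n j →+* O k n (Vi k n j) := (fixedO k n j).subtype
    -- T1 = O(V_j) ⊗_{R_j} O(V_i ∩ V_j)
    letI T1 := RTensor (fixedO k n j) (O k n (Vi k n j)) M subj fjM
    letI fiT1 : fixedO k n i →+* T1 :=
      (RTensor.inr (fixedO k n j) (O k n (Vi k n j)) M subj fjM).comp fiM
    -- T2 = T1 ⊗_{R_i} O(V_i ∩ V_j)
    letI T2 := RTensor (fixedO k n i) T1 M fiT1 fiM
    letI fjT2 : fixedO k n j →+* T2 :=
      (RTensor.inr (fixedO k n i) T1 M fiT1 fiM).comp fjM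
    -- T3 = T2 ⊗_{R_j} O(V_j)
    letI T3 := RTensor (fixedO k n j) T2 (O k n (Vi k n j)) fjT2 subj
    -- RHS = O(V_j) ⊗_{R_j} O(V_j)
    letI RHS := RTensor (fixedO k n j) (O k n (Vi k n j)) (O k n (Vi k n j)) subj subj
    letI resj : O k n (ZZ k n) →+* O k n (Vi k n j) := res k n (Vi_subset_ZZ k n j)
    letI l3 : O k n (ZZ k n) →+* T3 :=
      ((RTensor.inl (fixedO k n j) T2 (O k n (Vi k n j)) fjT2 subj).comp
        ((RTensor.inl (fixedO k n i) T1 M fiT1 fiM).comp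
          (RTensor.inl (fixedO k n j) (O k n (Vi k n j)) M subj fjM))).comp resj
    letI r3 : O k n (ZZ k n) →+* T3 :=
      (RTensor.inr (fixedO k n j) T2 (O k n (Vi k n j)) fjT2 subj).comp resj
    letI lR : O k n (ZZ k n) →+* RHS :=
      (RTensor.inl (fixedO k n j) (O k n (Vi k n j)) (O k n (Vi k n j)) subj subj).comp resj
    letI rR : O k n (ZZ k n) →+* RHS :=
      (RTensor.inr (fixedO k n j) (O k n (Vi k n j)) (O k n (Vi k n j)) subj subj).comp resj
    ∃ e : T3 ≃+ RHS,
      (∀ (a : O k n (ZZ k n)) (x : T3), e (l3 a * x) = lR a * e x) ∧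
      (∀ (a : O k n (ZZ k n)) (x : T3), e (x * r3 a) = e x * rR a) := by
  exact TL_assemble _ _ _ _ _ _ _ _ _
    (fjM_bijective k n i j hi hj hadj) (fiM_bijective k n i j hi hj hadj)

end TLpaper
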